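/- For every natural number l, every natural number ν ≥ 2, and every real x with x² ≠ 1, the complementary Legendre polynomials satisfy 𝒫_ν(x,l+1) = 𝒫_ν(x,l) − 2xν·𝒫_{ν−1}(x,l) − (1−x²)ν(ν−1)·𝒫_{ν−2}(x,l). -/

import Mathlib

open Polynomial Finset

lemma iteratedDeriv_polyEval (P : Polynomial ℝ) (n : ℕ) :
    iteratedDeriv n (fun x : ℝ => P.eval x) = fun x => (derivative^[n] P).eval x := by
  induction n with
  | zero => simp
  | succ n ih =>
    rw [iteratedDeriv_succ, ih]
    funext x
    rw [Polynomial.deriv, Function.iterate_succ_apply']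

lemma key (q : Polynomial ℝ) (n : ℕ) (hn : 2 ≤ n) (x : ℝ) :
    (derivative^[n] ((1 - X ^ 2) * q)).eval x
      = (1 - x ^ 2) * (derivative^[n] q).eval x
        - 2 * x * n * (derivative^[n - 1] q).eval x
        - n * ((n : ℝ) - 1) * (derivative^[n - 2] q).eval x := by
  have hd : ((1 : Polynomial ℝ) - X ^ 2).natDegree ≤ 2 := by
    compute_degree
  rw [mul_comm, iterate_derivative_mul,
    ← Finset.sum_range_add_sum_Ico _ (show 3 ≤ n + 1 by omega)]
  have hz : ∑ k ∈ Finset.Ico 3 (n + 1),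
      n.choose k • (derivative^[n - k] q * derivative^[k] ((1:Polynomial ℝ) - X ^ 2)) = 0 := by
    apply Finset.sum_eq_zero
    intro k hk
    rw [iterate_derivative_eq_zero (lt_of_le_of_lt hd (Finset.mem_Ico.mp hk).1)]
    simp
  rw [hz, add_zero]
  have h1 : derivative ((1 : Polynomial ℝ) - X ^ 2) = -(C 2 * X) := by
    simp [derivative_sub]
    rw [← one_add_one_eq_two, C_add, C_1]
  have h2 : derivative^[2] ((1 : Polynomial ℝ) - X ^ 2) = -(C 2) := by
    rw [Function.iterate_succ_apply', Function.iterate_one, h1]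
    simp
  rw [Finset.sum_range_succ, Finset.sum_range_succ, Finset.sum_range_one]
  rw [Function.iterate_one, h1, h2]
  simp only [Function.iterate_zero, id_eq, Nat.choose_zero_right, one_smul,
    Nat.choose_one_right, smul_eval, eval_mul, eval_sub, eval_one, eval_pow,
    eval_X, eval_neg, eval_C, nsmul_eq_mul, eval_natCast, eval_add]
  rw [Nat.cast_choose_two]
  field_simp
  simp only [Nat.sub_zero]
  ring

/-- Complementary Legendre polynomial
`𝒫_ν(x,l) = (1-x²)^(ν-l) · (dᵛ/dtᵛ)(1-t²)^l |_{t=x}` (zpow power). -/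
noncomputable def complLegendre (l ν : ℕ) (x : ℝ) : ℝ :=
  (1 - x ^ 2) ^ ((ν : ℤ) - (l : ℤ)) *
    iteratedDeriv ν (fun t : ℝ => (1 - t ^ 2) ^ l) x

theorem complLegendre_l_recursion (l ν : ℕ) (hν : 2 ≤ ν) (x : ℝ) (hx : x ^ 2 ≠ 1) :
    complLegendre (l + 1) ν x
      = complLegendre l ν x - 2 * x * (ν : ℝ) * complLegendre l (ν - 1) x
        - (1 - x ^ 2) * (ν : ℝ) * ((ν : ℝ) - 1) * complLegendre l (ν - 2) x := by
  have ha : (1 : ℝ) - x ^ 2 ≠ 0 := sub_ne_zero.mpr (Ne.symm hx)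
  have hf : ∀ m : ℕ, (fun t : ℝ => (1 - t ^ 2) ^ m)
      = fun t : ℝ => (((1 : Polynomial ℝ) - X ^ 2) ^ m).eval t := by
    intro m; funext t; simp
  unfold complLegendre
  simp only [hf, iteratedDeriv_polyEval]
  rw [show ((1 : Polynomial ℝ) - X ^ 2) ^ (l + 1) = (1 - X ^ 2) * (1 - X ^ 2) ^ l from pow_succ' _ _, key _ ν hν]
  have e1 : ((ν - 1 : ℕ) : ℤ) = (ν : ℤ) - 1 := by omega
  have e2 : ((ν - 2 : ℕ) : ℤ) = (ν : ℤ) - 2 := by omega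
  rw [e1, e2]
  push_cast
  rw [show (ν:ℤ) - l = ((ν:ℤ) - (l + 1)) + 1 by ring,
    show (ν:ℤ) - 1 - l = (ν:ℤ) - (l + 1) by ring,
    show (ν:ℤ) - 2 - l = ((ν:ℤ) - (l + 1)) - 1 by ring,
    zpow_add_one₀ ha, zpow_sub_one₀ ha]
  field_simp
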